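/- For λ ∈ (1, 3/2), the integral ∫₀¹ (t^(1/2 - λ) - t^(-1/2))/(1 - t)^(3/2) dt converges and equals 2√π·Γ(λ)·tan(πλ)/Γ(λ - 1/2). -/

import Mathlib

open Real MeasureTheory

open Set Filter Topology


lemma beta_eqon {a b : ℝ} : EqOn (fun x : ℝ => (x:ℂ) ^ ((a:ℂ) + 1 - 1) * (1 - (x:ℂ)) ^ ((b:ℂ) + 1 - 1))
    (fun t : ℝ => ((t ^ a * (1 - t) ^ b : ℝ) : ℂ)) (Set.Ioo 0 1) := by
  intro t ht
  have h1 : (0:ℝ) ≤ t := ht.1.le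
  have h2 : (0:ℝ) ≤ 1 - t := by linarith [ht.2.le]
  simp only [Complex.ofReal_mul, Complex.ofReal_cpow h1, Complex.ofReal_cpow h2,
    Complex.ofReal_sub, Complex.ofReal_one, add_sub_cancel_right]

lemma beta_integrable {a b : ℝ} (ha : -1 < a) (hb : -1 < b) :
    IntegrableOn (fun t : ℝ => t ^ a * (1 - t) ^ b) (Set.Ioo 0 1) := by
  have h := Complex.betaIntegral_convergent (u := (a:ℂ) + 1) (v := (b:ℂ) + 1)
    (by simpa using by linarith) (by simpa using by linarith)
  rw [intervalIntegrable_iff_integrableOn_Ioo_of_le zero_le_one] at h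
  have h2 := (h.congr_fun beta_eqon measurableSet_Ioo).re
  simpa [IntegrableOn] using h2

lemma beta_value {u v : ℝ} (hu : 0 < u) (hv : 0 < v) :
    ∫ t in Set.Ioo (0:ℝ) 1, t ^ (u - 1) * (1 - t) ^ (v - 1)
      = Real.Gamma u * Real.Gamma v / Real.Gamma (u + v) := by
  have h := Complex.Gamma_mul_Gamma_eq_betaIntegral (s := (u:ℂ)) (t := (v:ℂ))
    (by simpa using hu) (by simpa using hv)
  have hbeta : Complex.betaIntegral u v
      = ((∫ t in Set.Ioo (0:ℝ) 1, t ^ (u - 1) * (1 - t) ^ (v - 1) : ℝ) : ℂ) := by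
    rw [Complex.betaIntegral, intervalIntegral.integral_of_le zero_le_one,
      integral_Ioc_eq_integral_Ioo]
    rw [show ((∫ t in Set.Ioo (0:ℝ) 1, t ^ (u - 1) * (1 - t) ^ (v - 1) : ℝ) : ℂ)
      = ∫ t in Set.Ioo (0:ℝ) 1, ((t ^ (u - 1) * (1 - t) ^ (v - 1) : ℝ) : ℂ)
      from (_root_.integral_ofReal (𝕜 := ℂ)).symm]
    refine setIntegral_congr_fun measurableSet_Ioo (fun t ht => ?_)
    have h1 : (0:ℝ) ≤ t := ht.1.le
    have h2 : (0:ℝ) ≤ 1 - t := by linarith [ht.2.le]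
    simp only [Complex.ofReal_mul, Complex.ofReal_cpow h1, Complex.ofReal_cpow h2,
      Complex.ofReal_sub, Complex.ofReal_one]
  rw [hbeta, ← Complex.ofReal_add, Complex.Gamma_ofReal, Complex.Gamma_ofReal,
    Complex.Gamma_ofReal] at h
  have hG : Real.Gamma (u + v) ≠ 0 := (Real.Gamma_pos_of_pos (by linarith)).ne'
  have hre : Real.Gamma u * Real.Gamma v
      = Real.Gamma (u + v) * ∫ t in Set.Ioo (0:ℝ) 1, t ^ (u - 1) * (1 - t) ^ (v - 1) := by
    exact_mod_cast h
  field_simp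
  linarith [hre]

lemma pow_bound {s t : ℝ} (hs : 0 < s) (hs1 : s ≤ 1) (ht : t ∈ Set.Ioo (0:ℝ) 1) :
    0 ≤ 1 - t ^ s ∧ 1 - t ^ s ≤ 1 - t := by
  constructor
  · have := Real.rpow_le_one ht.1.le ht.2.le hs.le
    linarith
  · have : t ^ (1:ℝ) ≤ t ^ s := Real.rpow_le_rpow_of_exponent_ge ht.1 ht.2.le hs1
    rw [Real.rpow_one] at this
    linarith

lemma M_integrable {s : ℝ} (hs : 0 < s) (hs1 : s ≤ 1) :
    IntegrableOn (fun t : ℝ => (1 - t ^ s) * (1 - t) ^ (-(3:ℝ)/2)) (Set.Ioo 0 1) := by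
  have hg : IntegrableOn (fun t : ℝ => t ^ (0:ℝ) * (1 - t) ^ (-(1:ℝ)/2)) (Set.Ioo 0 1) :=
    beta_integrable (by norm_num) (by norm_num)
  refine Integrable.mono' hg ?_ ?_
  · apply Measurable.aestronglyMeasurable
    fun_prop
  · rw [ae_restrict_iff' measurableSet_Ioo]
    refine ae_of_all _ (fun t ht => ?_)
    have h1t : (0:ℝ) < 1 - t := by linarith [ht.2]
    have hb := pow_bound hs hs1 ht
    have h3 : (0:ℝ) ≤ (1 - t) ^ (-(3:ℝ)/2) := Real.rpow_nonneg h1t.le _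
    rw [Real.norm_eq_abs, abs_of_nonneg (mul_nonneg hb.1 h3), Real.rpow_zero, one_mul]
    calc (1 - t ^ s) * (1 - t) ^ (-(3:ℝ)/2) ≤ (1 - t) * (1 - t) ^ (-(3:ℝ)/2) :=
        mul_le_mul_of_nonneg_right hb.2 h3
      _ = (1 - t) ^ (-(1:ℝ)/2) := by
        rw [show (-(1:ℝ)/2) = 1 + -(3:ℝ)/2 by norm_num, Real.rpow_add h1t, Real.rpow_one]

lemma M_value {s : ℝ} (hs : 0 < s) (hs1 : s < 1) :
    ∫ t in Set.Ioo (0:ℝ) 1, (1 - t ^ s) * (1 - t) ^ (-(3:ℝ)/2)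
      = -2 + 2 * s * ∫ t in Set.Ioo (0:ℝ) 1, t ^ (s-1) * (1 - t) ^ (-(1:ℝ)/2) := by
  set F : ℝ → ℝ := fun t => 2 * ((1 - t ^ s) * (1 - t) ^ (-(1:ℝ)/2)) with hF
  set F' : ℝ → ℝ := fun t =>
    (1 - t ^ s) * (1 - t) ^ (-(3:ℝ)/2) - 2 * s * (t ^ (s-1) * (1 - t) ^ (-(1:ℝ)/2)) with hF'
  have hM := M_integrable hs hs1.le
  have hB : IntegrableOn (fun t : ℝ => t ^ (s-1) * (1 - t) ^ (-(1:ℝ)/2)) (Set.Ioo 0 1) :=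
    beta_integrable (by linarith) (by norm_num)
  have hint' : IntegrableOn F' (Set.Ioo 0 1) := hM.sub (hB.const_mul (2*s))
  have hderiv : ∀ t ∈ Set.Ioo (0:ℝ) 1, HasDerivAt F (F' t) t := by
    intro t ht
    have h1t : (0:ℝ) < 1 - t := by linarith [ht.2]
    have h1 : HasDerivAt (fun t : ℝ => 1 - t ^ s) (-(s * t ^ (s-1))) t := by
      simpa using (Real.hasDerivAt_rpow_const (p := s) (Or.inl ht.1.ne')).const_sub 1
    have h2 : HasDerivAt (fun t : ℝ => (1 - t) ^ (-(1:ℝ)/2))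
        ((-(1:ℝ)/2) * (1 - t) ^ (-(1:ℝ)/2 - 1) * (-1)) t := by
      exact (Real.hasDerivAt_rpow_const (p := -(1:ℝ)/2) (Or.inl h1t.ne')).comp t
        ((hasDerivAt_id t).const_sub 1)
    have h3 := ((h1.mul h2).const_mul 2)
    refine HasDerivAt.congr_deriv h3 ?_
    rw [show (-(1:ℝ)/2 - 1) = -(3:ℝ)/2 by norm_num, hF']
    ring
  have hint : IntervalIntegrable F' volume 0 1 := by
    rw [intervalIntegrable_iff_integrableOn_Ioo_of_le zero_le_one]
    exact hint'
  have ha : Filter.Tendsto F (nhdsWithin 0 (Set.Ioi 0)) (nhds 2) := by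
    have hc : ContinuousAt F 0 := by
      apply ContinuousAt.mul continuousAt_const
      apply ContinuousAt.mul
      · exact ContinuousAt.sub continuousAt_const (continuousAt_id.rpow_const (Or.inr hs.le))
      · exact ContinuousAt.rpow_const (by fun_prop) (Or.inl (by norm_num))
    have h0 : F 0 = 2 := by
      simp [hF, Real.zero_rpow hs.ne', Real.one_rpow]
    rw [← h0]
    exact hc.continuousWithinAt.tendsto
  have hb2 : Filter.Tendsto F (nhdsWithin 1 (Set.Iio 1)) (nhds 0) := by
    have hg : Filter.Tendsto (fun t : ℝ => 2 * (1 - t) ^ ((1:ℝ)/2)) (nhdsWithin 1 (Set.Iio 1)) (nhds 0) := by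
      have hc : ContinuousAt (fun t : ℝ => 2 * (1 - t) ^ ((1:ℝ)/2)) 1 := by
        apply ContinuousAt.mul continuousAt_const
        exact ContinuousAt.rpow_const (by fun_prop) (Or.inr (by norm_num))
      have h0 : 2 * ((1:ℝ) - 1) ^ ((1:ℝ)/2) = 0 := by
        norm_num
      have h2 : ContinuousWithinAt (fun t : ℝ => 2 * (1 - t) ^ ((1:ℝ)/2)) (Set.Iio 1) 1 :=
        hc.continuousWithinAt
      rw [ContinuousWithinAt, h0] at h2
      exact h2
    refine squeeze_zero' ?_ ?_ hg
    · filter_upwards [Ioo_mem_nhdsLT (by norm_num : (0:ℝ) < 1)]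
        with t ht
      have h1t : (0:ℝ) < 1 - t := by linarith [ht.2]
      exact mul_nonneg (by norm_num) (mul_nonneg (pow_bound hs hs1.le ht).1 (Real.rpow_nonneg h1t.le _))
    · filter_upwards [Ioo_mem_nhdsLT (by norm_num : (0:ℝ) < 1)]
        with t ht
      have h1t : (0:ℝ) < 1 - t := by linarith [ht.2]
      have hb := pow_bound hs hs1.le ht
      have : (1 - t ^ s) * (1 - t) ^ (-(1:ℝ)/2) ≤ (1 - t) * (1 - t) ^ (-(1:ℝ)/2) :=
        mul_le_mul_of_nonneg_right hb.2 (Real.rpow_nonneg h1t.le _)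
      have e : (1 - t) * (1 - t) ^ (-(1:ℝ)/2) = (1 - t) ^ ((1:ℝ)/2) := by
        rw [show ((1:ℝ)/2) = 1 + -(1:ℝ)/2 by norm_num, Real.rpow_add h1t, Real.rpow_one]
      simp only [hF]
      nlinarith [this, e]
  have key := intervalIntegral.integral_eq_sub_of_hasDerivAt_of_tendsto zero_lt_one hderiv hint ha hb2
  rw [intervalIntegral.integral_of_le zero_le_one, integral_Ioc_eq_integral_Ioo] at key
  have hsplit : ∫ t in Set.Ioo (0:ℝ) 1, F' t
      = (∫ t in Set.Ioo (0:ℝ) 1, (1 - t ^ s) * (1 - t) ^ (-(3:ℝ)/2))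
        - 2 * s * ∫ t in Set.Ioo (0:ℝ) 1, t ^ (s-1) * (1 - t) ^ (-(1:ℝ)/2) := by
    rw [hF']
    rw [integral_sub hM (hB.const_mul (2*s))]
    rw [MeasureTheory.integral_const_mul]
  rw [hsplit] at key
  linarith [key]

/-- For λ ∈ (1, 3/2), `∫₀¹ (t^(1/2-λ) - t^(-1/2))/(1-t)^(3/2) dt` converges and equals
`2√π Γ(λ) tan(πλ)/Γ(λ-1/2)`. -/
theorem stmt_9 (lam : ℝ) (hlam : 1 < lam) (hlam2 : lam < 3 / 2) :
    IntegrableOn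
      (fun t : ℝ => (t ^ (1 / 2 - lam) - t ^ (-(1:ℝ) / 2)) / (1 - t) ^ ((3:ℝ) / 2))
      (Set.Ioo 0 1) ∧
    ∫ t in Set.Ioo (0:ℝ) 1,
        (t ^ (1 / 2 - lam) - t ^ (-(1:ℝ) / 2)) / (1 - t) ^ ((3:ℝ) / 2)
      = 2 * Real.sqrt π * Real.Gamma lam * Real.tan (π * lam)
          / Real.Gamma (lam - 1 / 2) := by
  set q : ℝ := 3/2 - lam with hq
  have hq0 : 0 < q := by rw [hq]; linarith
  have hq1 : q < 1 := by rw [hq]; linarith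
  -- the four pieces
  set G1 : ℝ → ℝ := fun t => (1 - t ^ ((1:ℝ)/2)) * (1 - t) ^ (-(3:ℝ)/2) with hG1def
  set G2 : ℝ → ℝ := fun t => t ^ (-(1:ℝ)/2) * (1 - t) ^ (-(1:ℝ)/2) with hG2def
  set G3 : ℝ → ℝ := fun t => (1 - t ^ q) * (1 - t) ^ (-(3:ℝ)/2) with hG3def
  set G4 : ℝ → ℝ := fun t => t ^ (q - 1) * (1 - t) ^ (-(1:ℝ)/2) with hG4def
  have hG1 : IntegrableOn G1 (Set.Ioo 0 1) := M_integrable (by norm_num) (by norm_num)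
  have hG2 : IntegrableOn G2 (Set.Ioo 0 1) := beta_integrable (by norm_num) (by norm_num)
  have hG3 : IntegrableOn G3 (Set.Ioo 0 1) := M_integrable hq0 hq1.le
  have hG4 : IntegrableOn G4 (Set.Ioo 0 1) := beta_integrable (by linarith) (by norm_num)
  have hcomb : IntegrableOn (fun t => G1 t - G2 t - G3 t + G4 t) (Set.Ioo 0 1) :=
    ((hG1.sub hG2).sub hG3).add hG4
  have heq : Set.EqOn (fun t => G1 t - G2 t - G3 t + G4 t)
      (fun t : ℝ => (t ^ (1 / 2 - lam) - t ^ (-(1:ℝ) / 2)) / (1 - t) ^ ((3:ℝ) / 2))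
      (Set.Ioo 0 1) := by
    intro t ht
    have h1t : (0:ℝ) < 1 - t := by linarith [ht.2]
    have hX : (0:ℝ) < (1 - t) ^ ((3:ℝ)/2) := Real.rpow_pos_of_pos h1t _
    have e3 : (1 - t) ^ (-(3:ℝ)/2) = ((1 - t) ^ ((3:ℝ)/2))⁻¹ := by
      rw [show (-(3:ℝ)/2) = -((3:ℝ)/2) by norm_num, Real.rpow_neg h1t.le]
    have e1 : (1 - t) ^ (-(1:ℝ)/2) = (1 - t) * (1 - t) ^ (-(3:ℝ)/2) := by
      rw [show (-(1:ℝ)/2) = 1 + -(3:ℝ)/2 by norm_num, Real.rpow_add h1t, Real.rpow_one]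
    have eq' : t ^ q = t ^ (1/2 - lam) * t := by
      rw [show q = (1/2 - lam) + 1 by rw [hq]; ring, Real.rpow_add ht.1, Real.rpow_one]
    have eq'' : t ^ (q - 1) = t ^ (1/2 - lam) := by
      rw [show q - 1 = 1/2 - lam by rw [hq]; ring]
    have eh : t ^ ((1:ℝ)/2) = t ^ (-(1:ℝ)/2) * t := by
      rw [show ((1:ℝ)/2) = -(1:ℝ)/2 + 1 by norm_num, Real.rpow_add ht.1, Real.rpow_one]
    simp only [hG1def, hG2def, hG3def, hG4def]
    rw [eq', eq'', eh, e1, e3]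
    field_simp
    ring
  constructor
  · exact hcomb.congr_fun heq measurableSet_Ioo
  · rw [← setIntegral_congr_fun measurableSet_Ioo heq]
    have hsplit : ∫ t in Set.Ioo (0:ℝ) 1, (G1 t - G2 t - G3 t + G4 t)
        = (∫ t in Set.Ioo (0:ℝ) 1, G1 t) - (∫ t in Set.Ioo (0:ℝ) 1, G2 t)
          - (∫ t in Set.Ioo (0:ℝ) 1, G3 t) + (∫ t in Set.Ioo (0:ℝ) 1, G4 t) := by
      have e1 := integral_add (μ := volume.restrict (Set.Ioo 0 1)) ((hG1.sub hG2).sub hG3) hG4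
      have e2 := integral_sub (μ := volume.restrict (Set.Ioo 0 1)) (hG1.sub hG2) hG3
      have e3 := integral_sub (μ := volume.restrict (Set.Ioo 0 1)) hG1 hG2
      simp only [Pi.sub_apply, Pi.add_apply] at e1 e2 e3
      rw [e1, e2, e3]
    rw [hsplit]
    -- values
    have v1 : ∫ t in Set.Ioo (0:ℝ) 1, G1 t
        = -2 + 2 * ((1:ℝ)/2) * ∫ t in Set.Ioo (0:ℝ) 1, t ^ ((1:ℝ)/2 - 1) * (1 - t) ^ (-(1:ℝ)/2) :=
      M_value (by norm_num) (by norm_num)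
    have v3 : ∫ t in Set.Ioo (0:ℝ) 1, G3 t
        = -2 + 2 * q * ∫ t in Set.Ioo (0:ℝ) 1, t ^ (q - 1) * (1 - t) ^ (-(1:ℝ)/2) :=
      M_value hq0 hq1
    have v2 : ∫ t in Set.Ioo (0:ℝ) 1, G2 t
        = ∫ t in Set.Ioo (0:ℝ) 1, t ^ ((1:ℝ)/2 - 1) * (1 - t) ^ (-(1:ℝ)/2) := by
      simp only [hG2def]
      norm_num
    rw [v1, v2, v3]
    have vB : ∫ t in Set.Ioo (0:ℝ) 1, t ^ (q - 1) * (1 - t) ^ (-(1:ℝ)/2)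
        = Real.Gamma q * Real.Gamma (1/2) / Real.Gamma (q + 1/2) := by
      rw [show (-(1:ℝ)/2) = (1:ℝ)/2 - 1 by norm_num]
      exact beta_value hq0 (by norm_num)
    rw [vB]
    -- final Gamma algebra
    have hpi : (0:ℝ) < π := Real.pi_pos
    have hcos : Real.cos (π * lam) < 0 := by
      apply Real.cos_neg_of_pi_div_two_lt_of_lt <;> nlinarith
    have hsin : Real.sin (π * lam) < 0 := by
      have h1 : Real.sin (π * lam - π) > 0 :=
        Real.sin_pos_of_pos_of_lt_pi (by nlinarith) (by nlinarith)
      have h2 : Real.sin (π * lam - π) = -Real.sin (π * lam) := Real.sin_sub_pi _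
      linarith
    have hGq : 0 < Real.Gamma q := Real.Gamma_pos_of_pos hq0
    have hG2l : 0 < Real.Gamma (2 - lam) := Real.Gamma_pos_of_pos (by linarith)
    have hGl1 : 0 < Real.Gamma (lam - 1) := Real.Gamma_pos_of_pos (by linarith)
    have hGlh : 0 < Real.Gamma (lam - 1/2) := Real.Gamma_pos_of_pos (by linarith)
    have R1 : Real.Gamma (lam - 1/2) * Real.Gamma q = π / (-Real.cos (π * lam)) := by
      have := Real.Gamma_mul_Gamma_one_sub (lam - 1/2)
      rw [show (1:ℝ) - (lam - 1/2) = q by rw [hq]; ring] at this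
      rw [this, show π * (lam - 1/2) = π * lam - π/2 by ring, Real.sin_sub_pi_div_two]
    have R2 : Real.Gamma (lam - 1) * Real.Gamma (2 - lam) = π / (-Real.sin (π * lam)) := by
      have := Real.Gamma_mul_Gamma_one_sub (lam - 1)
      rw [show (1:ℝ) - (lam - 1) = 2 - lam by ring] at this
      rw [this, show π * (lam - 1) = π * lam - π by ring, Real.sin_sub_pi]
    have hC : Real.Gamma lam = (lam - 1) * Real.Gamma (lam - 1) := by
      have := Real.Gamma_add_one (show lam - 1 ≠ 0 by linarith)
      rw [show lam - 1 + 1 = lam by ring] at this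
      exact this
    have hqhalf : q + 1/2 = 2 - lam := by rw [hq]; ring
    have R1' : Real.Gamma (lam - 1/2) * Real.Gamma q * (-Real.cos (π * lam)) = π := by
      rw [R1]; exact div_mul_cancel₀ π (neg_ne_zero.mpr (ne_of_lt hcos))
    have R2' : Real.Gamma (lam - 1) * Real.Gamma (2 - lam) * (-Real.sin (π * lam)) = π := by
      rw [R2]; exact div_mul_cancel₀ π (neg_ne_zero.mpr (ne_of_lt hsin))
    rw [hqhalf, Real.Gamma_one_half_eq]
    have key : (1 - 2*q) * (Real.Gamma q * Real.sqrt π / Real.Gamma (2 - lam))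
        = 2 * Real.sqrt π * Real.Gamma lam * Real.tan (π * lam) / Real.Gamma (lam - 1/2) := by
      rw [hC, Real.tan_eq_sin_div_cos, mul_div_assoc']
      rw [show 2 * Real.sqrt π * ((lam - 1) * Real.Gamma (lam - 1))
          * (Real.sin (π * lam) / Real.cos (π * lam)) / Real.Gamma (lam - 1/2)
        = (2 * Real.sqrt π * ((lam - 1) * Real.Gamma (lam - 1)) * Real.sin (π * lam))
          / (Real.cos (π * lam) * Real.Gamma (lam - 1/2)) by
          rw [mul_div_assoc', div_div]]
      rw [div_eq_div_iff hG2l.ne' (mul_ne_zero (ne_of_lt hcos) hGlh.ne')]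
      rw [hq]
      linear_combination (-(2*lam-2)*Real.sqrt π) * R1' + ((2*lam-2)*Real.sqrt π) * R2'
    linear_combination key
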